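/- arXiv:1405.5737 — 2 statements merged into one kernel-verified Lean document; each statement's English description precedes it below -/
import Mathlib

section
/- Let A be an n×n real symmetric matrix with nonnegative entries and zero diagonal, and let D be the diagonal matrix with D_ii = ∑_j A_ij. Let P ⊆ {1,…,n} be a subset with complement Pᶜ, and let v_r = ∑_{i∈P} D_ii and v_l = ∑_{i∈Pᶜ} D_ii be the volumes of the two partitions, assumed positive. Define the indicator vector y by y_i = v_l if i ∈ P and y_i = −v_r if i ∈ Pᶜ. Then yᵀDy > 0 and yᵀ(D−A)y / (yᵀDy) = (∑_{i∈P} ∑_{j∈Pᶜ} A_ij)·(1/v_r + 1/v_l); i.e., the Rayleigh quotient of the indicator vector equals the normalized cut (NCut) objective of the bipartition. -/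
open BigOperators Matrix

/-- The Rayleigh quotient of the NCut indicator vector `y` (with `y i = v_l` on `P` and
`y i = -v_r` on `Pᶜ`) with respect to the pencil `(D - A, D)` equals the normalized cut
objective `(∑_{i∈P, j∈Pᶜ} A i j) * (1/v_r + 1/v_l)`. -/
theorem rayleigh_quotient_eq_ncut (n : ℕ) (A : Matrix (Fin n) (Fin n) ℝ)
    (hsym : A.IsSymm) (hnn : ∀ i j, 0 ≤ A i j) (hdiag : ∀ i, A i i = 0)
    (d : Fin n → ℝ) (hd : ∀ i, d i = ∑ j, A i j)
    (D : Matrix (Fin n) (Fin n) ℝ) (hD : D = Matrix.diagonal d)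
    (P : Finset (Fin n))
    (vr vl : ℝ) (hvr : vr = ∑ i ∈ P, d i) (hvl : vl = ∑ i ∈ Pᶜ, d i)
    (hvrpos : 0 < vr) (hvlpos : 0 < vl)
    (y : Fin n → ℝ) (hy : ∀ i, y i = if i ∈ P then vl else -vr) :
    0 < y ⬝ᵥ D.mulVec y ∧
    (y ⬝ᵥ (D - A).mulVec y) / (y ⬝ᵥ D.mulVec y) =
      (∑ i ∈ P, ∑ j ∈ Pᶜ, A i j) * (1 / vr + 1 / vl) := by
  have hsA : ∀ i j, A j i = A i j := fun i j => hsym.apply i j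
  set c := ∑ i ∈ P, ∑ j ∈ Pᶜ, A i j with hc
  have hc' : ∑ i ∈ Pᶜ, ∑ j ∈ P, A i j = c := by
    rw [hc]; refine Finset.sum_comm.trans ?_
    exact Finset.sum_congr rfl fun i _ => Finset.sum_congr rfl fun j _ => hsA i j
  have hPP : ∑ i ∈ P, ∑ j ∈ P, A i j = vr - c := by
    have h1 : vr = ∑ i ∈ P, (∑ j ∈ P, A i j + ∑ j ∈ Pᶜ, A i j) := by
      rw [hvr]
      exact Finset.sum_congr rfl fun i _ => by rw [hd i, Finset.sum_add_sum_compl]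
    rw [Finset.sum_add_distrib] at h1
    rw [hc]; linarith
  have hQQ : ∑ i ∈ Pᶜ, ∑ j ∈ Pᶜ, A i j = vl - c := by
    have h1 : vl = ∑ i ∈ Pᶜ, (∑ j ∈ P, A i j + ∑ j ∈ Pᶜ, A i j) := by
      rw [hvl]
      exact Finset.sum_congr rfl fun i _ => by rw [hd i, Finset.sum_add_sum_compl]
    rw [Finset.sum_add_distrib, hc'] at h1
    linarith
  have hyP : ∀ i ∈ P, y i = vl := fun i hi => by rw [hy i, if_pos hi]
  have hyQ : ∀ i ∈ Pᶜ, y i = -vr := fun i hi => by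
    rw [hy i, if_neg (by simpa using hi)]
  have hyD : y ⬝ᵥ D.mulVec y = vr * vl * (vr + vl) := by
    have h0 : y ⬝ᵥ D.mulVec y = ∑ i, y i * (d i * y i) := by
      subst hD
      simp [dotProduct, Matrix.mulVec_diagonal]
    rw [h0, ← Finset.sum_add_sum_compl P]
    have h1 : ∑ i ∈ P, y i * (d i * y i) = vl * vl * vr := by
      rw [hvr, Finset.mul_sum]
      exact Finset.sum_congr rfl fun i hi => by rw [hyP i hi]; ring
    have h2 : ∑ i ∈ Pᶜ, y i * (d i * y i) = vr * vr * vl := by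
      rw [hvl, Finset.mul_sum]
      exact Finset.sum_congr rfl fun i hi => by rw [hyQ i hi]; ring
    rw [h1, h2]; ring
  have hyA : y ⬝ᵥ A.mulVec y = vl * vl * (vr - c) + vr * vr * (vl - c)
      - 2 * (vl * vr * c) := by
    have h0 : y ⬝ᵥ A.mulVec y = ∑ i, ∑ j, y i * (A i j * y j) := by
      simp [dotProduct, Matrix.mulVec, Finset.mul_sum]
    have hrow : ∀ i, ∑ j, y i * (A i j * y j)
        = y i * vl * (∑ j ∈ P, A i j) - y i * vr * (∑ j ∈ Pᶜ, A i j) := by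
      intro i
      rw [← Finset.sum_add_sum_compl P (fun j => y i * (A i j * y j))]
      have e1 : ∑ j ∈ P, y i * (A i j * y j) = y i * vl * ∑ j ∈ P, A i j := by
        rw [Finset.mul_sum]
        exact Finset.sum_congr rfl fun j hj => by rw [hyP j hj]; ring
      have e2 : ∑ j ∈ Pᶜ, y i * (A i j * y j) = -(y i * vr * ∑ j ∈ Pᶜ, A i j) := by
        rw [Finset.mul_sum, ← Finset.sum_neg_distrib]
        exact Finset.sum_congr rfl fun j hj => by rw [hyQ j hj]; ring
      rw [e1, e2]; ring
    have h1 : ∑ i ∈ P, ∑ j, y i * (A i j * y j)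
        = vl * vl * (vr - c) - vl * vr * c := by
      calc ∑ i ∈ P, ∑ j, y i * (A i j * y j)
          = ∑ i ∈ P, (vl * vl * (∑ j ∈ P, A i j) - vl * vr * (∑ j ∈ Pᶜ, A i j)) := by
            refine Finset.sum_congr rfl fun i hi => ?_
            rw [hrow i, hyP i hi]
        _ = vl * vl * (∑ i ∈ P, ∑ j ∈ P, A i j) - vl * vr * (∑ i ∈ P, ∑ j ∈ Pᶜ, A i j) := by
            rw [Finset.sum_sub_distrib, ← Finset.mul_sum, ← Finset.mul_sum]
        _ = vl * vl * (vr - c) - vl * vr * c := by rw [hPP, ← hc]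
    have h2 : ∑ i ∈ Pᶜ, ∑ j, y i * (A i j * y j)
        = vr * vr * (vl - c) - vl * vr * c := by
      calc ∑ i ∈ Pᶜ, ∑ j, y i * (A i j * y j)
          = ∑ i ∈ Pᶜ, (vr * vr * (∑ j ∈ Pᶜ, A i j) - vr * vl * (∑ j ∈ P, A i j)) := by
            refine Finset.sum_congr rfl fun i hi => ?_
            rw [hrow i, hyQ i hi]; ring
        _ = vr * vr * (∑ i ∈ Pᶜ, ∑ j ∈ Pᶜ, A i j) - vr * vl * (∑ i ∈ Pᶜ, ∑ j ∈ P, A i j) := by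
            rw [Finset.sum_sub_distrib, ← Finset.mul_sum, ← Finset.mul_sum]
        _ = vr * vr * (vl - c) - vl * vr * c := by rw [hQQ, hc']; ring
    rw [h0, ← Finset.sum_add_sum_compl P, h1, h2]; ring
  have hDpos : 0 < y ⬝ᵥ D.mulVec y := by
    rw [hyD]; positivity
  refine ⟨hDpos, ?_⟩
  have hnum : y ⬝ᵥ (D - A).mulVec y = c * (vr + vl) ^ 2 := by
    rw [Matrix.sub_mulVec, dotProduct_sub, hyD, hyA]; ring
  rw [hnum, hyD]
  field_simp
  ring
end

section
/- Let A be an n×n real symmetric matrix with nonnegative entries and zero diagonal, let D be the diagonal matrix with D_ii = ∑_j A_ij, assume D_ii > 0 for all i, and let L_s = D^{-1/2}(D−A)D^{-1/2} with eigenvalues listed in nondecreasing order with multiplicity μ₀ ≤ μ₁ ≤ … ≤ μ_{n−1}. Then for every subset P ⊆ {1,…,n} with v_r = ∑_{i∈P} D_ii > 0 and v_l = ∑_{i∉P} D_ii > 0, the second smallest eigenvalue satisfies μ₁ ≤ (∑_{i∈P} ∑_{j∉P} A_ij)·(1/v_r + 1/v_l); i.e., the algebraic connectivity λ_{n−1}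 of the graph is a lower bound for the normalized cut objective of every bipartition. -/
open BigOperators Matrix

private lemma dot_sum_aux {n : ℕ} (a : Fin n → ℝ) (f : Fin n → Fin n → ℝ) :
    a ⬝ᵥ (∑ k, f k) = ∑ k, a ⬝ᵥ f k := by
  simp only [dotProduct, Finset.sum_apply, Finset.mul_sum]
  exact Finset.sum_comm

set_option maxHeartbeats 2000000 in
/-- The algebraic connectivity (second smallest eigenvalue of the normalized Laplacian)
is a lower bound for the normalized cut objective of every bipartition. -/
theorem second_eigenvalue_le_ncut (n : ℕ) (hn : 2 ≤ n)
    (A : Matrix (Fin n) (Fin n) ℝ)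
    (hsym : A.IsSymm) (hnn : ∀ i j, 0 ≤ A i j) (hdiag : ∀ i, A i i = 0)
    (d : Fin n → ℝ) (hd : ∀ i, d i = ∑ j, A i j) (hdpos : ∀ i, 0 < d i)
    (Ls : Matrix (Fin n) (Fin n) ℝ)
    (hLs : Ls = Matrix.diagonal (fun i => (Real.sqrt (d i))⁻¹) *
      (Matrix.diagonal d - A) * Matrix.diagonal (fun i => (Real.sqrt (d i))⁻¹))
    (μ : Fin n → ℝ) (hmono : Monotone μ)
    (v : Fin n → Fin n → ℝ)
    (hortho : ∀ k l, v k ⬝ᵥ v l = if k = l then (1 : ℝ) else 0)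
    (hev : ∀ k, Ls.mulVec (v k) = μ k • v k) :
    ∀ P : Finset (Fin n), 0 < ∑ i ∈ P, d i → 0 < ∑ i ∈ Pᶜ, d i →
      μ ⟨1, by omega⟩ ≤
        (∑ i ∈ P, ∑ j ∈ Pᶜ, A i j) * (1 / ∑ i ∈ P, d i + 1 / ∑ i ∈ Pᶜ, d i) := by
  intro P hvr hvl
  set vr := ∑ i ∈ P, d i with hvrdef
  set vl := ∑ i ∈ Pᶜ, d i with hvldef
  set cc := ∑ i ∈ P, ∑ j ∈ Pᶜ, A i j with hccdef
  have hc0 : 0 ≤ cc := Finset.sum_nonneg fun i _ => Finset.sum_nonneg fun j _ => hnn i j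
  have hsumpos : 0 < vr⁻¹ + vl⁻¹ := by positivity
  have hone : (1 : ℝ) / vr + 1 / vl = vr⁻¹ + vl⁻¹ := by rw [one_div, one_div]
  rcases le_or_gt (μ ⟨1, by omega⟩) 0 with hlam | hlam
  · exact hlam.trans (by rw [hone]; exact mul_nonneg hc0 hsumpos.le)
  -- notation
  set i0 : Fin n := ⟨0, by omega⟩ with hi0
  set i1 : Fin n := ⟨1, by omega⟩ with hi1
  -- spectral key lemma
  have key : ∀ y : Fin n → ℝ, y ⬝ᵥ v i0 = 0 →
      μ i1 * (y ⬝ᵥ y) ≤ y ⬝ᵥ Ls.mulVec y := by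
    intro y hy0
    set V : Matrix (Fin n) (Fin n) ℝ := Matrix.of v with hV
    have hVVt : V * Vᵀ = 1 := by
      ext k l
      simpa [Matrix.mul_apply, Matrix.one_apply, dotProduct, hV] using hortho k l
    have hVtV : Vᵀ * V = 1 := mul_eq_one_comm.mp hVVt
    have hexp : (∑ k, (v k ⬝ᵥ y) • v k) = y := by
      funext i
      conv_rhs => rw [← Matrix.one_mulVec y, ← hVtV]
      simp only [Matrix.mulVec, Matrix.mul_apply, dotProduct, Matrix.transpose_apply,
        hV, Matrix.of_apply, Finset.sum_apply, Pi.smul_apply, smul_eq_mul, Finset.sum_mul]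
      rw [Finset.sum_comm]
      exact Finset.sum_congr rfl fun k _ => Finset.sum_congr rfl fun j _ => by ring
    have hLy : Ls.mulVec y = ∑ k, (v k ⬝ᵥ y) • (μ k • v k) := by
      conv_lhs => rw [← hexp]
      rw [← Matrix.mulVecLin_apply, map_sum]
      simp only [Matrix.mulVecLin_apply, Matrix.mulVec_smul, hev]
    have hyLy : y ⬝ᵥ Ls.mulVec y = ∑ k, μ k * ((v k ⬝ᵥ y) * (v k ⬝ᵥ y)) := by
      rw [hLy, dot_sum_aux]
      refine Finset.sum_congr rfl fun k _ => ?_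
      rw [dotProduct_smul, dotProduct_smul, smul_eq_mul, smul_eq_mul,
        dotProduct_comm y (v k)]
      ring
    have hyy : y ⬝ᵥ y = ∑ k, (v k ⬝ᵥ y) * (v k ⬝ᵥ y) := by
      nth_rewrite 2 [← hexp]
      rw [dot_sum_aux]
      refine Finset.sum_congr rfl fun k _ => ?_
      rw [dotProduct_smul, smul_eq_mul, dotProduct_comm y (v k)]
    rw [hyy, hyLy, Finset.mul_sum]
    refine Finset.sum_le_sum fun k _ => ?_
    by_cases hk : k = i0
    · subst hk
      rw [dotProduct_comm] at hy0
      rw [hy0]; ring_nf; rfl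
    · have h1k : i1 ≤ k := by
        have : k.val ≠ 0 := fun h => hk (Fin.ext h)
        exact Fin.mk_le_of_le_val (by omega)
      have := hmono h1k
      nlinarith [mul_self_nonneg (v k ⬝ᵥ y)]

  -- basic square-root facts
  have hdnn : ∀ i, (0:ℝ) ≤ d i := fun i => (hdpos i).le
  have hsq : ∀ i, Real.sqrt (d i) * Real.sqrt (d i) = d i := fun i => Real.mul_self_sqrt (hdnn i)
  have hsqpos : ∀ i, 0 < Real.sqrt (d i) := fun i => Real.sqrt_pos.mpr (hdpos i)
  set Dh : Matrix (Fin n) (Fin n) ℝ := Matrix.diagonal (fun i => (Real.sqrt (d i))⁻¹) with hDh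
  set g : Fin n → ℝ := fun i => if i ∈ P then vr⁻¹ else -vl⁻¹ with hg
  set u : Fin n → ℝ := fun i => Real.sqrt (d i) with hu
  set x : Fin n → ℝ := fun i => Real.sqrt (d i) * g i with hx
  have hgP : ∀ i ∈ P, g i = vr⁻¹ := fun i hi => by simp [hg, hi]
  have hgQ : ∀ i ∈ Pᶜ, g i = -vl⁻¹ := fun i hi => by
    simp [hg, (Finset.mem_compl.mp hi)]
  have hsplitsum : ∀ f : Fin n → ℝ, ∑ i, f i = ∑ i ∈ P, f i + ∑ i ∈ Pᶜ, f i :=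
    fun f => (P.sum_add_sum_compl f).symm
  -- Ls annihilates u
  have hDhu : Dh.mulVec u = fun _ => (1:ℝ) := by
    funext i
    rw [Matrix.mulVec_diagonal]
    exact inv_mul_cancel₀ (hsqpos i).ne'
  have hDA1 : (Matrix.diagonal d - A).mulVec (fun _ => (1:ℝ)) = 0 := by
    funext i
    rw [Matrix.sub_mulVec]
    have h1 : (Matrix.diagonal d).mulVec (fun _ => (1:ℝ)) i = d i := by
      rw [Matrix.mulVec_diagonal]; ring
    have h2 : A.mulVec (fun _ => (1:ℝ)) i = d i := by
      simp only [Matrix.mulVec, dotProduct, mul_one]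
      exact (hd i).symm
    simp [Pi.sub_apply, h1, h2]
  have hLsu : Ls.mulVec u = 0 := by
    rw [hLs, ← Matrix.mulVec_mulVec, ← Matrix.mulVec_mulVec, hDhu, hDA1, Matrix.mulVec_zero]
  -- symmetry of Ls
  have hLsSymm : Lsᵀ = Ls := by
    rw [hLs]
    have hDhT : Dhᵀ = Dh := by rw [hDh, Matrix.diagonal_transpose]
    simp only [Matrix.transpose_mul, Matrix.transpose_sub, Matrix.diagonal_transpose,
      hsym.eq, hDhT]
    rw [Matrix.mul_assoc]
  -- dot products
  have hux : u ⬝ᵥ x = 0 := by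
    have h1 : u ⬝ᵥ x = ∑ i, d i * g i := by
      simp only [dotProduct]
      refine Finset.sum_congr rfl fun i _ => ?_
      show Real.sqrt (d i) * (Real.sqrt (d i) * g i) = d i * g i
      linear_combination g i * hsq i
    have e1 : ∑ i ∈ P, d i * g i = (∑ i ∈ P, d i) * vr⁻¹ := by
      rw [Finset.sum_mul]
      exact Finset.sum_congr rfl fun i hi => by rw [hgP i hi]
    have e2 : ∑ i ∈ Pᶜ, d i * g i = (∑ i ∈ Pᶜ, d i) * -vl⁻¹ := by
      rw [Finset.sum_mul]
      exact Finset.sum_congr rfl fun i hi => by rw [hgQ i hi]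
    rw [h1, hsplitsum (fun i => d i * g i), e1, e2, ← hvrdef, ← hvldef]
    field_simp
    ring
  have huu : u ⬝ᵥ u = vr + vl := by
    have h1 : u ⬝ᵥ u = ∑ i, d i := by
      simp only [dotProduct]
      exact Finset.sum_congr rfl fun i _ => hsq i
    rw [h1, hsplitsum d, ← hvrdef, ← hvldef]
  have hq1 : ∑ i, d i * g i * g i = vr * (vr⁻¹ * vr⁻¹) + vl * (vl⁻¹ * vl⁻¹) := by
    have e1 : ∑ i ∈ P, d i * g i * g i = (∑ i ∈ P, d i) * (vr⁻¹ * vr⁻¹) := by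
      rw [Finset.sum_mul]
      exact Finset.sum_congr rfl fun i hi => by rw [hgP i hi]; ring
    have e2 : ∑ i ∈ Pᶜ, d i * g i * g i = (∑ i ∈ Pᶜ, d i) * (vl⁻¹ * vl⁻¹) := by
      rw [Finset.sum_mul]
      exact Finset.sum_congr rfl fun i hi => by rw [hgQ i hi]; ring
    rw [hsplitsum (fun i => d i * g i * g i), e1, e2, ← hvrdef, ← hvldef]
  have hxx : x ⬝ᵥ x = vr⁻¹ + vl⁻¹ := by
    have h1 : x ⬝ᵥ x = ∑ i, d i * g i * g i := by
      simp only [dotProduct]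
      refine Finset.sum_congr rfl fun i _ => ?_
      show Real.sqrt (d i) * g i * (Real.sqrt (d i) * g i) = d i * g i * g i
      linear_combination g i * g i * hsq i
    rw [h1, hq1]
    field_simp
  -- Rayleigh quotient of x
  have hDhx : Dh.mulVec x = g := by
    funext i
    rw [Matrix.mulVec_diagonal]
    show (Real.sqrt (d i))⁻¹ * (Real.sqrt (d i) * g i) = g i
    rw [← mul_assoc, inv_mul_cancel₀ (hsqpos i).ne', one_mul]
  have hxDh : ∀ w, x ⬝ᵥ Dh.mulVec w = g ⬝ᵥ w := by
    intro w
    simp only [dotProduct]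
    refine Finset.sum_congr rfl fun i _ => ?_
    rw [Matrix.mulVec_diagonal]
    show Real.sqrt (d i) * g i * ((Real.sqrt (d i))⁻¹ * w i) = g i * w i
    field_simp [(hsqpos i).ne']
  have hxLx : x ⬝ᵥ Ls.mulVec x = g ⬝ᵥ ((Matrix.diagonal d - A).mulVec g) := by
    rw [hLs, ← Matrix.mulVec_mulVec, ← Matrix.mulVec_mulVec, hDhx, hxDh]
  have hgDAg : g ⬝ᵥ ((Matrix.diagonal d - A).mulVec g)
      = (∑ i, d i * g i * g i) - (∑ i, ∑ j, A i j * g i * g j) := by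
    rw [Matrix.sub_mulVec, dotProduct_sub]
    congr 1
    · simp only [dotProduct, Matrix.mulVec_diagonal]
      exact Finset.sum_congr rfl fun i _ => by ring
    · simp only [dotProduct, Matrix.mulVec, Finset.mul_sum]
      exact Finset.sum_congr rfl fun i _ => Finset.sum_congr rfl fun j _ => by ring
  -- cut sums
  have hcQP : ∑ i ∈ Pᶜ, ∑ j ∈ P, A i j = cc := by
    rw [hccdef]
    refine Finset.sum_comm.trans ?_
    exact Finset.sum_congr rfl fun a _ => Finset.sum_congr rfl fun b _ => hsym.apply a b
  have hrow : ∀ i, (∑ j ∈ P, A i j) + ∑ j ∈ Pᶜ, A i j = d i := fun i => by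
    rw [P.sum_add_sum_compl, ← hd i]
  have hcPP : (∑ i ∈ P, ∑ j ∈ P, A i j) + cc = vr := by
    rw [hccdef, hvrdef, ← Finset.sum_add_distrib]
    exact Finset.sum_congr rfl fun i _ => hrow i
  have hcQQ : (∑ i ∈ Pᶜ, ∑ j ∈ P, A i j) + (∑ i ∈ Pᶜ, ∑ j ∈ Pᶜ, A i j) = vl := by
    rw [hvldef, ← Finset.sum_add_distrib]
    exact Finset.sum_congr rfl fun i _ => hrow i
  have pull : ∀ (s t : Finset (Fin n)) (a b : ℝ),
      (∑ i ∈ s, ∑ j ∈ t, A i j * a * b) = (∑ i ∈ s, ∑ j ∈ t, A i j) * (a * b) := by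
    intro s t a b
    rw [Finset.sum_mul]
    exact Finset.sum_congr rfl fun i _ => by
      rw [Finset.sum_mul]; exact Finset.sum_congr rfl fun j _ => by ring
  have hT : ∑ i, ∑ j, A i j * g i * g j
      = ((∑ i ∈ P, ∑ j ∈ P, A i j) * (vr⁻¹ * vr⁻¹)
        + (∑ i ∈ P, ∑ j ∈ Pᶜ, A i j) * (vr⁻¹ * -vl⁻¹))
        + ((∑ i ∈ Pᶜ, ∑ j ∈ P, A i j) * (-vl⁻¹ * vr⁻¹)
        + (∑ i ∈ Pᶜ, ∑ j ∈ Pᶜ, A i j) * (-vl⁻¹ * -vl⁻¹)) := by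
    rw [hsplitsum (fun i => ∑ j, A i j * g i * g j)]
    congr 1
    · have h2 : ∀ i ∈ P, ∑ j, A i j * g i * g j
          = (∑ j ∈ P, A i j * vr⁻¹ * vr⁻¹) + ∑ j ∈ Pᶜ, A i j * vr⁻¹ * -vl⁻¹ := by
        intro i hi
        rw [hsplitsum (fun j => A i j * g i * g j)]
        congr 1
        · exact Finset.sum_congr rfl fun j hj => by rw [hgP i hi, hgP j hj]
        · exact Finset.sum_congr rfl fun j hj => by rw [hgP i hi, hgQ j hj]
      rw [Finset.sum_congr rfl h2, Finset.sum_add_distrib, pull P P vr⁻¹ vr⁻¹,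
        pull P Pᶜ vr⁻¹ (-vl⁻¹)]
    · have h2 : ∀ i ∈ Pᶜ, ∑ j, A i j * g i * g j
          = (∑ j ∈ P, A i j * -vl⁻¹ * vr⁻¹) + ∑ j ∈ Pᶜ, A i j * -vl⁻¹ * -vl⁻¹ := by
        intro i hi
        rw [hsplitsum (fun j => A i j * g i * g j)]
        congr 1
        · exact Finset.sum_congr rfl fun j hj => by rw [hgQ i hi, hgP j hj]
        · exact Finset.sum_congr rfl fun j hj => by rw [hgQ i hi, hgQ j hj]
      rw [Finset.sum_congr rfl h2, Finset.sum_add_distrib, pull Pᶜ P (-vl⁻¹) vr⁻¹,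
        pull Pᶜ Pᶜ (-vl⁻¹) (-vl⁻¹)]
  have hxLxval : x ⬝ᵥ Ls.mulVec x = cc * ((vr⁻¹ + vl⁻¹) * (vr⁻¹ + vl⁻¹)) := by
    rw [hxLx, hgDAg, hq1, hT]
    have e1 : (∑ i ∈ P, ∑ j ∈ P, A i j) = vr - cc := by linarith [hcPP]
    have e2 : (∑ i ∈ Pᶜ, ∑ j ∈ Pᶜ, A i j) = vl - cc := by
      have := hcQP; linarith [hcQQ]
    rw [e1, e2, hcQP, ← hccdef]
    field_simp
    ring
  -- annihilation dot products
  have huLx : u ⬝ᵥ Ls.mulVec x = 0 := by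
    rw [Matrix.dotProduct_mulVec, ← Matrix.mulVec_transpose, hLsSymm, hLsu,
      zero_dotProduct]
  have huu_pos : 0 < u ⬝ᵥ u := by rw [huu]; linarith
  -- reduction of the goal
  have goal_of : μ i1 * (vr⁻¹ + vl⁻¹) ≤ cc * ((vr⁻¹ + vl⁻¹) * (vr⁻¹ + vl⁻¹)) →
      μ i1 ≤ cc * (1 / vr + 1 / vl) := by
    intro h
    rw [hone]
    rw [← mul_assoc] at h
    exact le_of_mul_le_mul_right h hsumpos
  clear_value i0 i1 Dh g u x vr vl cc
  by_cases hc0x : v i0 ⬝ᵥ x = 0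
  · have hk := key x (by rw [dotProduct_comm]; exact hc0x)
    rw [hxx, hxLxval] at hk
    exact goal_of hk
  · set a : ℝ := v i0 ⬝ᵥ x with ha
    set b : ℝ := v i0 ⬝ᵥ u with hb
    set y : Fin n → ℝ := a • u - b • x with hy
    have hyv0 : y ⬝ᵥ v i0 = 0 := by
      rw [hy, sub_dotProduct, smul_dotProduct, smul_dotProduct,
        dotProduct_comm u (v i0), dotProduct_comm x (v i0)]
      simp only [smul_eq_mul, ← ha, ← hb]
      ring
    have hyy2 : y ⬝ᵥ y = a * a * (u ⬝ᵥ u) + b * b * (x ⬝ᵥ x) := by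
      rw [hy]
      simp only [sub_dotProduct, dotProduct_sub, smul_dotProduct,
        dotProduct_smul, smul_eq_mul, dotProduct_comm x u, hux]
      ring
    have hyLy2 : y ⬝ᵥ Ls.mulVec y = b * b * (x ⬝ᵥ Ls.mulVec x) := by
      have h1 : Ls.mulVec y = a • Ls.mulVec u - b • Ls.mulVec x := by
        rw [hy, Matrix.mulVec_sub, Matrix.mulVec_smul, Matrix.mulVec_smul]
      rw [h1, hLsu, smul_zero, zero_sub, hy]
      simp only [sub_dotProduct, dotProduct_neg, smul_dotProduct,
        dotProduct_smul, smul_eq_mul, huLx]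
      ring
    clear_value a b y
    have hk := key y hyv0
    rw [hyy2, hyLy2] at hk
    by_cases hbz : b = 0
    · exfalso
      rw [hbz] at hk
      simp only [zero_mul, mul_zero, add_zero] at hk
      have ha2 : 0 < a * a := mul_self_pos.mpr hc0x
      have hpos : 0 < μ i1 * (a * a * (u ⬝ᵥ u)) := mul_pos hlam (mul_pos ha2 huu_pos)
      linarith [hk, hpos]
    · apply goal_of
      have hbb : 0 < b * b := mul_self_pos.mpr hbz
      rw [hxx, hxLxval] at hk
      have hprod : 0 ≤ μ i1 * (a * a * (u ⬝ᵥ u)) :=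
        mul_nonneg hlam.le (mul_nonneg (mul_self_nonneg a) huu_pos.le)
      have h3 : (b * b) * (μ i1 * (vr⁻¹ + vl⁻¹))
          ≤ (b * b) * (cc * ((vr⁻¹ + vl⁻¹) * (vr⁻¹ + vl⁻¹))) := by
        nlinarith [hk, hprod]
      exact le_of_mul_le_mul_left h3 hbb
end
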